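/- For every choice of (a,b,c) ∈ {2,3}^3, the 5×5 symmetric matrix M with rows (0,1,2,a,b),(1,0,1,2,c),(2,1,0,1,2),(a,2,1,0,1),(b,c,2,1,0) has second largest eigenvalue strictly greater than (17-√329)/2. -/

import Mathlib

open Matrix

noncomputable def sortedEigenvalues {ι : Type*} [Fintype ι] [DecidableEq ι]
    (A : Matrix ι ι ℝ) (hA : A.IsHermitian) : List ℝ :=
  (Finset.univ.val.map hA.eigenvalues).sort (· ≤ ·)

/-- `eig A hA k` is the `k`-th largest eigenvalue of `A` (1-indexed). -/
noncomputable def eig {ι : Type*} [Fintype ι] [DecidableEq ι]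
    (A : Matrix ι ι ℝ) (hA : A.IsHermitian) (k : ℕ) : ℝ :=
  (sortedEigenvalues A hA)[Fintype.card ι - k]!

private lemma quadform_spectral {A : Matrix (Fin 5) (Fin 5) ℝ} (hA : A.IsHermitian)
    (x : Fin 5 → ℝ) :
    x ⬝ᵥ A *ᵥ x =
      ∑ i, hA.eigenvalues i *
        (((hA.eigenvectorUnitary : Matrix (Fin 5) (Fin 5) ℝ)ᵀ *ᵥ x) i)^2 := by
  set U := (hA.eigenvectorUnitary : Matrix (Fin 5) (Fin 5) ℝ) with hU
  have hstar : star U = Uᵀ := by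
    ext i j; simp [Matrix.star_apply]
  have hofreal : (RCLike.ofReal ∘ hA.eigenvalues : Fin 5 → ℝ) = hA.eigenvalues := by
    ext i; simp
  conv_lhs => rw [hA.spectral_theorem]
  rw [Unitary.conjStarAlgAut_apply, ← hU, hstar, hofreal, ← Matrix.mulVec_mulVec, ← Matrix.mulVec_mulVec,
    Matrix.dotProduct_mulVec]
  have hvm : x ᵥ* U = Uᵀ *ᵥ x := by rw [← Matrix.vecMul_transpose, Matrix.transpose_transpose]
  rw [hvm]
  simp only [dotProduct, Matrix.mulVec_diagonal]
  exact Finset.sum_congr rfl fun i _ => by ring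

private lemma norm_spectral {A : Matrix (Fin 5) (Fin 5) ℝ} (hA : A.IsHermitian)
    (x : Fin 5 → ℝ) :
    x ⬝ᵥ x =
      ∑ i, (((hA.eigenvectorUnitary : Matrix (Fin 5) (Fin 5) ℝ)ᵀ *ᵥ x) i)^2 := by
  set U := (hA.eigenvectorUnitary : Matrix (Fin 5) (Fin 5) ℝ) with hU
  have hstar : star U = Uᵀ := by ext i j; simp [Matrix.star_apply]
  have huni : U * star U = 1 := (Matrix.mem_unitaryGroup_iff).mp hA.eigenvectorUnitary.2
  have : (Uᵀ *ᵥ x) ⬝ᵥ (Uᵀ *ᵥ x) = x ⬝ᵥ x := by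
    rw [Matrix.dotProduct_mulVec, Matrix.vecMul_transpose, Matrix.mulVec_mulVec]
    rw [hstar] at huni
    rw [huni, Matrix.one_mulVec]
  rw [← this]
  simp [dotProduct, sq]

private lemma two_eigs_gt {A : Matrix (Fin 5) (Fin 5) ℝ} (hA : A.IsHermitian) {t : ℝ}
    {u v : Fin 5 → ℝ}
    (hu : 0 < u ⬝ᵥ A *ᵥ u - t * (u ⬝ᵥ u))
    (hv : 0 < v ⬝ᵥ A *ᵥ v - t * (v ⬝ᵥ v))
    (hcross : (u ⬝ᵥ A *ᵥ v - t * (u ⬝ᵥ v))^2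
        < (u ⬝ᵥ A *ᵥ u - t * (u ⬝ᵥ u)) * (v ⬝ᵥ A *ᵥ v - t * (v ⬝ᵥ v))) :
    ∃ i j : Fin 5, i ≠ j ∧ t < hA.eigenvalues i ∧ t < hA.eigenvalues j := by
  by_contra hcon
  push_neg at hcon
  have hi0 : ∃ i0 : Fin 5, ∀ i, i ≠ i0 → hA.eigenvalues i ≤ t := by
    by_cases hex : ∃ i, t < hA.eigenvalues i
    · obtain ⟨i0, hgt⟩ := hex
      exact ⟨i0, fun i hi => hcon i0 i (fun e => hi e.symm) hgt⟩
    · push_neg at hex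
      exact ⟨0, fun i _ => hex i⟩
  obtain ⟨i0, hi0⟩ := hi0
  set U := (hA.eigenvectorUnitary : Matrix (Fin 5) (Fin 5) ℝ) with hUdef
  set w : Fin 5 → ℝ := fun j => U j i0 with hwdef
  set cu := w ⬝ᵥ u with hcu
  set cv := w ⬝ᵥ v with hcv
  obtain ⟨α, β, hzero, hnz⟩ : ∃ α β : ℝ, α * cu + β * cv = 0 ∧ (α ≠ 0 ∨ β ≠ 0) := by
    by_cases h0 : cu = 0
    · exact ⟨1, 0, by simp [h0], Or.inl one_ne_zero⟩
    · exact ⟨cv, -cu, by ring, Or.inr (neg_ne_zero.mpr h0)⟩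
  set x : Fin 5 → ℝ := α • u + β • v with hx
  set qu := u ⬝ᵥ A *ᵥ u - t * (u ⬝ᵥ u)
  set qv := v ⬝ᵥ A *ᵥ v - t * (v ⬝ᵥ v)
  set qc := u ⬝ᵥ A *ᵥ v - t * (u ⬝ᵥ v)
  have hsym : v ⬝ᵥ A *ᵥ u = u ⬝ᵥ A *ᵥ v := by
    have hAt : Aᵀ = A := by
      have := hA; rwa [Matrix.IsHermitian, Matrix.conjTranspose_eq_transpose_of_trivial] at this
    rw [Matrix.dotProduct_mulVec, ← hAt, Matrix.vecMul_transpose, dotProduct_comm, hAt]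
  have hvsym : v ⬝ᵥ u = u ⬝ᵥ v := dotProduct_comm v u
  have hQpos : 0 < x ⬝ᵥ A *ᵥ x - t * (x ⬝ᵥ x) := by
    have hexp : x ⬝ᵥ A *ᵥ x - t * (x ⬝ᵥ x) = α^2 * qu + 2*α*β*qc + β^2 * qv := by
      simp only [hx, Matrix.mulVec_add, Matrix.mulVec_smul, add_dotProduct,
        dotProduct_add, smul_dotProduct, dotProduct_smul,
        smul_eq_mul, qu, qv, qc]
      rw [hsym, hvsym]; ring
    rw [hexp]
    rcases eq_or_ne β 0 with rfl | hβ
    · have hα : α ≠ 0 := hnz.resolve_right (by simp)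
      nlinarith [mul_pos (show (0:ℝ) < α^2 by positivity) hu]
    · nlinarith [sq_nonneg (α * qu + β * qc),
        mul_pos (show (0:ℝ) < β^2 by positivity) (sub_pos.mpr hcross), hu, mul_pos hu hv]
  set y : Fin 5 → ℝ := Uᵀ *ᵥ x with hy
  have hyi0 : y i0 = 0 := by
    have : y i0 = α * cu + β * cv := by
      simp only [hy, hx, Matrix.mulVec, dotProduct, hcu, hcv, hwdef,
        Matrix.transpose_apply, Pi.add_apply, Pi.smul_apply, smul_eq_mul,
        Finset.mul_sum]
      rw [← Finset.sum_add_distrib]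
      exact Finset.sum_congr rfl fun j _ => by ring
    rw [this, hzero]
  have hQnonpos : x ⬝ᵥ A *ᵥ x - t * (x ⬝ᵥ x) ≤ 0 := by
    rw [quadform_spectral hA x, norm_spectral hA x, Finset.mul_sum, ← Finset.sum_sub_distrib]
    apply Finset.sum_nonpos
    intro i _
    rcases eq_or_ne i i0 with rfl | hne
    · rw [show ((Uᵀ *ᵥ x) i) = y i from rfl, hyi0]; simp
    · have h1 : hA.eigenvalues i - t ≤ 0 := sub_nonpos.mpr (hi0 i hne)
      have : hA.eigenvalues i * ((Uᵀ *ᵥ x) i)^2 - t * ((Uᵀ *ᵥ x) i)^2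
          = (hA.eigenvalues i - t) * ((Uᵀ *ᵥ x) i)^2 := by ring
      rw [this]
      exact mul_nonpos_of_nonpos_of_nonneg h1 (sq_nonneg _)
  linarith

private lemma eig2_gt {A : Matrix (Fin 5) (Fin 5) ℝ} (hA : A.IsHermitian) {t : ℝ}
    (h2 : ∃ i j : Fin 5, i ≠ j ∧ t < hA.eigenvalues i ∧ t < hA.eigenvalues j) :
    t < eig A hA 2 := by
  obtain ⟨i, j, hij, hi, hj⟩ := h2
  have hcard : Fintype.card (Fin 5) = 5 := by simp
  rw [eig, hcard]
  set L := sortedEigenvalues A hA with hLdef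
  have hlen : L.length = 5 := by
    simp [hLdef, sortedEigenvalues]
  have hsorted : L.Pairwise (· ≤ ·) := Multiset.pairwise_sort _ _
  have hms : (L : Multiset ℝ) = Finset.univ.val.map hA.eigenvalues :=
    Multiset.sort_eq _ _
  by_contra hle
  push_neg at hle
  obtain ⟨e0, e1, e2, e3, e4, hLeq⟩ : ∃ e0 e1 e2 e3 e4, L = [e0, e1, e2, e3, e4] := by
    match L, hlen with
    | [e0, e1, e2, e3, e4], _ => exact ⟨e0, e1, e2, e3, e4, rfl⟩
  rw [hLeq] at hsorted hle hms
  have hle3 : e3 ≤ t := by simpa using hle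
  simp only [List.pairwise_cons, List.mem_cons] at hsorted
  have h03 : e0 ≤ e3 := by
    have := hsorted.1 e3; simp at this; linarith [this]
  have h13 : e1 ≤ e3 := by
    have := hsorted.2.1 e3; simp at this; linarith [this]
  have h23 : e2 ≤ e3 := by
    have := hsorted.2.2.1 e3; simp at this; linarith [this]
  have h34 : e3 ≤ e4 := by
    have := hsorted.2.2.2.1 e4; simp at this; linarith [this]
  have hmem : ∀ k : Fin 5, t < hA.eigenvalues k → hA.eigenvalues k = e4 := by
    intro k hk
    have hmemk : hA.eigenvalues k ∈ (([e0,e1,e2,e3,e4] : List ℝ) : Multiset ℝ) := by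
      rw [hms]
      exact Multiset.mem_map_of_mem _ (Finset.mem_univ_val _)
    simp only [Multiset.mem_coe, List.mem_cons, List.not_mem_nil, or_false] at hmemk
    rcases hmemk with h|h|h|h|h <;> first
      | (exfalso; rw [h] at hk; linarith)
      | exact h
  have hcount : 2 ≤ Multiset.count e4 (Finset.univ.val.map hA.eigenvalues) := by
    have hsub : ({i, j} : Finset (Fin 5)) ⊆
        Finset.univ.filter (fun k => e4 = hA.eigenvalues k) := by
      intro k hk
      simp only [Finset.mem_insert, Finset.mem_singleton] at hk
      rcases hk with rfl | rfl <;>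
        simp [Finset.mem_filter, (hmem _ (by assumption)).symm]
    have h2card : 2 ≤ (Finset.univ.filter (fun k => e4 = hA.eigenvalues k)).card := by
      calc 2 = ({i, j} : Finset (Fin 5)).card := (Finset.card_pair hij).symm
      _ ≤ _ := Finset.card_le_card hsub
    rw [Multiset.count_map]
    exact h2card
  rw [← hms] at hcount
  have : Multiset.count e4 (([e0,e1,e2,e3,e4] : List ℝ) : Multiset ℝ) ≤ 1 := by
    have hne : ∀ z ∈ [e0,e1,e2,e3], z ≠ e4 := by
      intro z hz
      have hzt : z ≤ t := by
        simp only [List.mem_cons, List.not_mem_nil, or_false] at hz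
        rcases hz with rfl|rfl|rfl|rfl <;> linarith
      intro hzz
      rw [hzz] at hzt
      have : t < e4 := lt_of_lt_of_le hi (by rw [hmem i hi])
      linarith
    simp only [Multiset.coe_count]
    simp [List.count_cons, hne e0 (by simp), hne e1 (by simp), hne e2 (by simp),
      hne e3 (by simp)]
  omega

set_option maxHeartbeats 1600000 in
theorem forbidden_P5_submatrices (a b c : ℝ)
    (ha : a = 2 ∨ a = 3) (hb : b = 2 ∨ b = 3) (hc : c = 2 ∨ c = 3)
    (h : (!![(0:ℝ),1,2,a,b;1,0,1,2,c;2,1,0,1,2;a,2,1,0,1;b,c,2,1,0]).IsHermitian) :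
    eig _ h 2 > (17 - Real.sqrt 329) / 2 := by
  have hs2 : Real.sqrt 329 ^ 2 = 329 := Real.sq_sqrt (by norm_num)
  have hs0 : (0:ℝ) ≤ Real.sqrt 329 := Real.sqrt_nonneg _
  have hs18 : (18:ℝ) < Real.sqrt 329 := by nlinarith
  have hs19 : Real.sqrt 329 < 19 := by nlinarith
  obtain rfl | rfl := ha <;> obtain rfl | rfl := hb <;> obtain rfl | rfl := hc
  · refine eig2_gt h (two_eigs_gt h (u := ![5,4,4,4,5]) (v := ![2,-5,5,-5,2]) ?_ ?_ ?_) <;>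
      norm_num [dotProduct, Matrix.mulVec, Fin.sum_univ_five, Matrix.vecHead,
        Matrix.vecTail, Function.comp, Matrix.cons_val_two, Matrix.cons_val_three, Matrix.cons_val_four] <;> nlinarith
  · refine eig2_gt h (two_eigs_gt h (u := ![4,5,4,4,5]) (v := ![5,-6,5,-1,-2]) ?_ ?_ ?_) <;>
      norm_num [dotProduct, Matrix.mulVec, Fin.sum_univ_five, Matrix.vecHead,
        Matrix.vecTail, Function.comp, Matrix.cons_val_two, Matrix.cons_val_three, Matrix.cons_val_four] <;> nlinarith
  · refine eig2_gt h (two_eigs_gt h (u := ![5,4,4,4,5]) (v := ![3,-6,4,-6,3]) ?_ ?_ ?_) <;>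
      norm_num [dotProduct, Matrix.mulVec, Fin.sum_univ_five, Matrix.vecHead,
        Matrix.vecTail, Function.comp, Matrix.cons_val_two, Matrix.cons_val_three, Matrix.cons_val_four] <;> nlinarith
  · refine eig2_gt h (two_eigs_gt h (u := ![5,4,4,4,5]) (v := ![3,-6,6,-5,1]) ?_ ?_ ?_) <;>
      norm_num [dotProduct, Matrix.mulVec, Fin.sum_univ_five, Matrix.vecHead,
        Matrix.vecTail, Function.comp, Matrix.cons_val_two, Matrix.cons_val_three, Matrix.cons_val_four] <;> nlinarith
  · refine eig2_gt h (two_eigs_gt h (u := ![5,4,4,5,4]) (v := ![-2,-1,5,-6,5]) ?_ ?_ ?_) <;>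
      norm_num [dotProduct, Matrix.mulVec, Fin.sum_univ_five, Matrix.vecHead,
        Matrix.vecTail, Function.comp, Matrix.cons_val_two, Matrix.cons_val_three, Matrix.cons_val_four] <;> nlinarith
  · refine eig2_gt h (two_eigs_gt h (u := ![5,4,4,4,5]) (v := ![-5,5,0,-5,5]) ?_ ?_ ?_) <;>
      norm_num [dotProduct, Matrix.mulVec, Fin.sum_univ_five, Matrix.vecHead,
        Matrix.vecTail, Function.comp, Matrix.cons_val_two, Matrix.cons_val_three, Matrix.cons_val_four] <;> nlinarith
  · refine eig2_gt h (two_eigs_gt h (u := ![5,4,4,4,5]) (v := ![1,-5,6,-6,3]) ?_ ?_ ?_) <;>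
      norm_num [dotProduct, Matrix.mulVec, Fin.sum_univ_five, Matrix.vecHead,
        Matrix.vecTail, Function.comp, Matrix.cons_val_two, Matrix.cons_val_three, Matrix.cons_val_four] <;> nlinarith
  · refine eig2_gt h (two_eigs_gt h (u := ![5,4,4,4,5]) (v := ![-4,6,0,-6,4]) ?_ ?_ ?_) <;>
      norm_num [dotProduct, Matrix.mulVec, Fin.sum_univ_five, Matrix.vecHead,
        Matrix.vecTail, Function.comp, Matrix.cons_val_two, Matrix.cons_val_three, Matrix.cons_val_four] <;> nlinarith
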